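/- For every n ≥ 1 and every permutation π ∈ S_n avoiding both 213 and 231, iar(π) = comp(π), where iar(π) is the length of the initial ascending run of π and comp(π) is the number of components of π. -/

import Mathlib

open Finset
open scoped Classical

/-- Number of components of a permutation of `Fin n` (0-based version of
`|{i ∈ [n] : π(j) ≤ i for all j ≤ i}|`). -/
def comps {n : ℕ} (π : Equiv.Perm (Fin n)) : ℕ :=
  (Finset.univ.filter fun i : Fin n => ∀ j, j ≤ i → π j ≤ i).card

/-- Number of descents. -/
def des {n : ℕ} (π : Equiv.Perm (Fin n)) : ℕ :=
  (Finset.univ.filter fun i : Fin n =>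
    ∃ h : (i : ℕ) + 1 < n, π ⟨(i : ℕ) + 1, h⟩ < π i).card

/-- Length of the initial ascending run: `min(DES(π) ∪ {n})` with 1-based descent positions. -/
noncomputable def iar {n : ℕ} (π : Equiv.Perm (Fin n)) : ℕ :=
  sInf {k : ℕ | k = n ∨ 0 < k ∧ ∃ h : k < n, π ⟨k, h⟩ < π ⟨k - 1, by omega⟩}

/-- `π` contains the pattern `σ`. -/
def ContainsPat {n m : ℕ} (π : Equiv.Perm (Fin n)) (σ : Equiv.Perm (Fin m)) : Prop :=
  ∃ f : Fin m → Fin n, StrictMono f ∧ ∀ a b : Fin m, σ a < σ b ↔ π (f a) < π (f b)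

/-- `π` avoids the pattern `σ`. -/
def AvoidsPat {n m : ℕ} (π : Equiv.Perm (Fin n)) (σ : Equiv.Perm (Fin m)) : Prop :=
  ¬ ContainsPat π σ

def pat123 : Equiv.Perm (Fin 3) := ⟨![0, 1, 2], ![0, 1, 2], by decide, by decide⟩
def pat132 : Equiv.Perm (Fin 3) := ⟨![0, 2, 1], ![0, 2, 1], by decide, by decide⟩
def pat213 : Equiv.Perm (Fin 3) := ⟨![1, 0, 2], ![1, 0, 2], by decide, by decide⟩
def pat231 : Equiv.Perm (Fin 3) := ⟨![1, 2, 0], ![2, 0, 1], by decide, by decide⟩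
def pat312 : Equiv.Perm (Fin 3) := ⟨![2, 0, 1], ![1, 2, 0], by decide, by decide⟩
def pat321 : Equiv.Perm (Fin 3) := ⟨![2, 1, 0], ![2, 1, 0], by decide, by decide⟩

/-- Direct sum of two permutations. -/
def directSum {m l : ℕ} (π : Equiv.Perm (Fin m)) (σ : Equiv.Perm (Fin l)) :
    Equiv.Perm (Fin (m + l)) :=
  finSumFinEquiv.permCongr (Equiv.sumCongr π σ)

/-- Direct sum of a finite family of permutations. -/
def dsum : {k : ℕ} → (a : Fin k → ℕ) → ((i : Fin k) → Equiv.Perm (Fin (a i))) →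
    Equiv.Perm (Fin (∑ i, a i))
  | 0, _, _ => Equiv.refl _
  | _ + 1, a, τ =>
      (finCongr (Fin.sum_univ_succ a).symm).permCongr
        (directSum (τ 0) (dsum (fun i => a i.succ) (fun i => τ i.succ)))

/-- Set of values of left-to-right maxima. -/
noncomputable def LMAX {n : ℕ} (π : Equiv.Perm (Fin n)) : Finset (Fin n) :=
  Finset.univ.filter fun v => ∃ i, π i = v ∧ ∀ j, j < i → π j < v

/-- Set of values of left-to-right minima. -/
noncomputable def LMIN {n : ℕ} (π : Equiv.Perm (Fin n)) : Finset (Fin n) :=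
  Finset.univ.filter fun v => ∃ i, π i = v ∧ ∀ j, j < i → v < π j

/-- Set of descent bottoms. -/
noncomputable def DESB {n : ℕ} (π : Equiv.Perm (Fin n)) : Finset (Fin n) :=
  Finset.univ.filter fun v => ∃ i : ℕ, ∃ h : i + 1 < n,
    π ⟨i + 1, h⟩ = v ∧ π ⟨i + 1, h⟩ < π ⟨i, by omega⟩

/- ===== auxiliary lemmas ===== -/

lemma strictMono_vec3 {n : ℕ} {a b c : Fin n} (h1 : a < b) (h2 : b < c) :
    StrictMono ![a, b, c] := by
  intro x y hxy
  fin_cases x <;> fin_cases y <;> simp_all <;>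
    first | exact h1 | exact h2 | exact h1.trans h2

lemma lt_iff_rev {α β : Type*} [LinearOrder α] [LinearOrder β] {x y : α} {u v : β}
    (h : x < y ↔ u < v) (hxy : x ≠ y) (huv : u ≠ v) : y < x ↔ v < u := by
  rcases lt_trichotomy x y with h1 | h1 | h1
  · exact iff_of_false (asymm h1) (asymm (h.mp h1))
  · exact absurd h1 hxy
  · have h2 : v < u := by
      rcases lt_trichotomy u v with h2 | h2 | h2
      · exact absurd (h.mpr h2) (asymm h1)
      · exact absurd h2 huv
      · exact h2
    exact iff_of_true h1 h2

lemma contains3 {n : ℕ} (π : Equiv.Perm (Fin n)) (σ : Equiv.Perm (Fin 3)) {i j k : Fin n}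
    (hij : i < j) (hjk : j < k)
    (h01 : σ 0 < σ 1 ↔ π i < π j)
    (h02 : σ 0 < σ 2 ↔ π i < π k)
    (h12 : σ 1 < σ 2 ↔ π j < π k) :
    ContainsPat π σ := by
  have e01 : (0 : Fin 3) ≠ 1 := by decide
  have e02 : (0 : Fin 3) ≠ 2 := by decide
  have e12 : (1 : Fin 3) ≠ 2 := by decide
  refine ⟨![i, j, k], strictMono_vec3 hij hjk, ?_⟩
  intro a b
  fin_cases a <;> fin_cases b <;>
    simp only [Matrix.cons_val_zero, Matrix.cons_val_one, Matrix.head_cons,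
      Matrix.cons_val_two, Matrix.tail_cons, Fin.isValue] <;>
    first
      | exact h01
      | exact h02
      | exact h12
      | exact lt_iff_rev h01 (σ.injective.ne e01) (fun h => absurd (π.injective h) (ne_of_lt hij))
      | exact lt_iff_rev h02 (σ.injective.ne e02) (fun h => absurd (π.injective h) (ne_of_lt (hij.trans hjk)))
      | exact lt_iff_rev h12 (σ.injective.ne e12) (fun h => absurd (π.injective h) (ne_of_lt hjk))
      | simp

lemma asc_lt {n : ℕ} {π : Equiv.Perm (Fin n)} (h2 : AvoidsPat π pat231)
    {i : Fin n} (hi : (i : ℕ) + 1 < n) (hasc : π i < π ⟨(i : ℕ) + 1, hi⟩) :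
    ∀ j : Fin n, i < j → π i < π j := by
  intro j hj
  rcases eq_or_lt_of_le (show ((i : ℕ) + 1 : ℕ) ≤ (j : ℕ) from hj) with he | hl
  · have : j = ⟨(i : ℕ) + 1, hi⟩ := Fin.ext he.symm
    rw [this]; exact hasc
  · by_contra hle
    push_neg at hle
    have hne : π j ≠ π i := fun h => absurd (π.injective h) (ne_of_gt hj)
    have hjlt : π j < π i := lt_of_le_of_ne hle hne
    refine h2 (contains3 π pat231 (i := i) (j := ⟨(i : ℕ) + 1, hi⟩) (k := j)
      (by simp [Fin.lt_def]) (by simp [Fin.lt_def]; omega) ?_ ?_ ?_)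
    · exact iff_of_true (by decide) hasc
    · exact iff_of_false (by decide) (asymm hjlt)
    · exact iff_of_false (by decide) (asymm (hjlt.trans hasc))

lemma desc_lt {n : ℕ} {π : Equiv.Perm (Fin n)} (h1 : AvoidsPat π pat213)
    {i : Fin n} (hi : (i : ℕ) + 1 < n) (hdes : π ⟨(i : ℕ) + 1, hi⟩ < π i) :
    ∀ j : Fin n, i < j → π j < π i := by
  intro j hj
  rcases eq_or_lt_of_le (show ((i : ℕ) + 1 : ℕ) ≤ (j : ℕ) from hj) with he | hl
  · have : j = ⟨(i : ℕ) + 1, hi⟩ := Fin.ext he.symm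
    rw [this]; exact hdes
  · by_contra hle
    push_neg at hle
    have hne : π i ≠ π j := fun h => absurd (π.injective h) (ne_of_lt hj)
    have hjlt : π i < π j := lt_of_le_of_ne hle hne
    refine h1 (contains3 π pat213 (i := i) (j := ⟨(i : ℕ) + 1, hi⟩) (k := j)
      (by simp [Fin.lt_def]) (by simp [Fin.lt_def]; omega) ?_ ?_ ?_)
    · exact iff_of_false (by decide) (asymm hdes)
    · exact iff_of_true (by decide) hjlt
    · exact iff_of_true (by decide) (hdes.trans hjlt)

/-- for every (213,231)-avoiding permutation, `iar(π) = comp(π)`. -/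
theorem iar_eq_comps_213_231 (n : ℕ) (hn : 1 ≤ n) (π : Equiv.Perm (Fin n))
    (h1 : AvoidsPat π pat213) (h2 : AvoidsPat π pat231) :
    iar π = comps π := by
  classical
  set S : Set ℕ := {k : ℕ | k = n ∨ 0 < k ∧ ∃ h : k < n, π ⟨k, h⟩ < π ⟨k - 1, by omega⟩} with hS
  have hSn : n ∈ S := Or.inl rfl
  have hk_mem : iar π ∈ S := Nat.sInf_mem ⟨n, hSn⟩
  have hk_le : iar π ≤ n := Nat.sInf_le hSn
  set k := iar π with hkdef
  have hk_pos : 0 < k := by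
    rcases hk_mem with h | h
    · omega
    · exact h.1
  -- strict ascents strictly before position k
  have hasc : ∀ m : ℕ, 0 < m → m < k → ∃ h : m < n,
      π ⟨m - 1, by omega⟩ < π ⟨m, h⟩ := by
    intro m hm hmk
    have hmn : m < n := lt_of_lt_of_le hmk hk_le
    have hnotmem : m ∉ S := Nat.notMem_of_lt_sInf hmk
    refine ⟨hmn, ?_⟩
    have hnd : ¬ π ⟨m, hmn⟩ < π ⟨m - 1, by omega⟩ := by
      intro hlt; exact hnotmem (Or.inr ⟨hm, hmn, hlt⟩)
    refine lt_of_le_of_ne (not_lt.mp hnd) ?_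
    intro he
    have := π.injective he
    simp only [Fin.mk.injEq] at this
    omega
  -- π fixes positions m with m + 1 < k
  have hid : ∀ m : ℕ, ∀ hm : m + 1 < k, (π ⟨m, by omega⟩ : ℕ) = m := by
    intro m
    induction m using Nat.strong_induction_on with
    | _ m IH =>
      intro hm
      have hmn : m < n := by omega
      have hlb : m ≤ (π ⟨m, hmn⟩ : ℕ) := by
        by_contra hc
        push_neg at hc
        have h' := IH (π ⟨m, hmn⟩ : ℕ) hc (by omega)
        have he : π ⟨(π ⟨m, hmn⟩ : ℕ), by omega⟩ = π ⟨m, hmn⟩ := Fin.ext h'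
        have := π.injective he
        simp only [Fin.mk.injEq] at this
        omega
      by_contra hc
      have hub : m < (π ⟨m, hmn⟩ : ℕ) := by omega
      have hmn' : m + 1 < n := by omega
      obtain ⟨_, hstep⟩ := hasc (m + 1) (by omega) hm
      have hstep' : π ⟨m, hmn⟩ < π ⟨m + 1, hmn'⟩ := by simpa using hstep
      set j : Fin n := π.symm ⟨m, hmn⟩ with hj
      have hpj : π j = ⟨m, hmn⟩ := π.apply_symm_apply _
      have hij : (⟨m, hmn⟩ : Fin n) < j := by
        rcases lt_trichotomy (⟨m, hmn⟩ : Fin n) j with h | h | h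
        · exact h
        · exfalso
          rw [← h] at hpj
          have : (π ⟨m, hmn⟩ : ℕ) = m := by rw [hpj]
          omega
        · exfalso
          have hjm : (j : ℕ) < m := h
          have h' := IH (j : ℕ) hjm (by omega)
          have he : (⟨(j : ℕ), by omega⟩ : Fin n) = j := Fin.ext rfl
          rw [he, hpj] at h'
          simp at h'
          omega
      have hfin := asc_lt h2 hmn' hstep' j hij
      rw [hpj] at hfin
      have : (π ⟨m, hmn⟩ : ℕ) < m := hfin
      omega
  have hid' : ∀ j : Fin n, (j : ℕ) + 1 < k → (π j : ℕ) = (j : ℕ) := by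
    intro j hj
    have := hid (j : ℕ) hj
    have he : (⟨(j : ℕ), by omega⟩ : Fin n) = j := Fin.ext rfl
    rwa [he] at this
  rcases eq_or_lt_of_le hk_le with hkn | hkn
  · -- k = n : π is the identity
    have hall : ∀ i : Fin n, π i = i := by
      intro i
      rcases lt_or_ge ((i : ℕ) + 1) n with h | h
      · exact Fin.ext (hid' i (by omega))
      · -- i is the last element
        by_contra hne
        have hin : (i : ℕ) = n - 1 := by have := i.isLt; omega
        have hvne : (π i : ℕ) ≠ (i : ℕ) := fun he => hne (Fin.ext he)
        have hvlt : (π i : ℕ) < n - 1 := by have := (π i).isLt; omega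
        have h' := hid (π i : ℕ) (by omega)
        have he : π ⟨(π i : ℕ), by omega⟩ = π i := Fin.ext h'
        have := π.injective he
        simp only [Fin.ext_iff] at this
        omega
    have : (Finset.univ.filter fun i : Fin n => ∀ j, j ≤ i → π j ≤ i) = Finset.univ := by
      apply Finset.filter_true_of_mem
      intro i _ j hj
      rw [hall j]; exact hj
    rw [comps, this, Finset.card_univ, Fintype.card_fin, ← hkn]
  · -- k < n : there is a descent at position k
    have hdesc : ∃ h : k < n, π ⟨k, h⟩ < π ⟨k - 1, by omega⟩ := by
      rcases hk_mem with h | h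
      · omega
      · exact h.2
    obtain ⟨hklt, hdesc⟩ := hdesc
    set p : Fin n := ⟨k - 1, by omega⟩ with hp
    have hpval : (p : ℕ) = k - 1 := rfl
    have hpn : (p : ℕ) + 1 < n := by omega
    have hdes2 : π ⟨(p : ℕ) + 1, hpn⟩ < π p := by
      have e : (⟨(p : ℕ) + 1, hpn⟩ : Fin n) = ⟨k, hklt⟩ := Fin.ext (by simp only [Fin.val_mk]; omega)
      rw [e]; exact hdesc
    have hplb : k - 1 ≤ (π p : ℕ) := by
      by_contra hc
      push_neg at hc
      have h' := hid' ⟨(π p : ℕ), by omega⟩ (by simpa using (by omega : (π p : ℕ) + 1 < k))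
      have he : π ⟨(π p : ℕ), by omega⟩ = π p := Fin.ext h'
      have := π.injective he
      simp only [Fin.ext_iff, Fin.val_mk] at this
      omega
    have hmaxge : ∀ j : Fin n, π j ≤ π p := by
      intro j
      rcases lt_trichotomy j p with h | h | h
      · have hjv : (j : ℕ) + 1 < k := by
          have : (j : ℕ) < k - 1 := h
          omega
        have := hid' j hjv
        rw [Fin.le_def, this]
        omega
      · rw [h]
      · exact (desc_lt h1 hpn hdes2 j h).le
    have hpmax : (π p : ℕ) = n - 1 := by
      have h' := hmaxge (π.symm ⟨n - 1, by omega⟩)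
      rw [π.apply_symm_apply] at h'
      rw [Fin.le_def] at h'
      have := (π p).isLt
      simp at h'
      omega
    have hset : (Finset.univ.filter fun i : Fin n => ∀ j, j ≤ i → π j ≤ i)
        = insert ⟨n - 1, by omega⟩ (Finset.univ.filter fun i : Fin n => (i : ℕ) + 1 < k) := by
      ext i
      simp only [Finset.mem_filter, Finset.mem_insert, Finset.mem_univ, true_and]
      constructor
      · intro hP
        by_contra hcon
        push_neg at hcon
        obtain ⟨hne, hge⟩ := hcon
        have hiv : (i : ℕ) ≠ n - 1 := fun he => hne (Fin.ext he)
        have h2' : (i : ℕ) < n - 1 := by have := i.isLt; omega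
        have hpi : p ≤ i := by rw [Fin.le_def, hpval]; omega
        have := hP p hpi
        rw [Fin.le_def, hpmax] at this
        omega
      · intro h
        rcases h with h | h
        · intro j _
          rw [h, Fin.le_def]
          have := (π j).isLt
          simp
          omega
        · intro j hj
          have hjv : (j : ℕ) + 1 < k := by
            have := Fin.le_def.mp hj
            omega
          have := hid' j hjv
          rw [Fin.le_def, this]
          exact Fin.le_def.mp hj
    have hnotmem : (⟨n - 1, by omega⟩ : Fin n) ∉
        (Finset.univ.filter fun i : Fin n => (i : ℕ) + 1 < k) := by
      simp only [Finset.mem_filter, Finset.mem_univ, true_and]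
      omega
    have hcard : (Finset.univ.filter fun i : Fin n => (i : ℕ) + 1 < k).card = k - 1 := by
      have e : (Finset.univ.filter fun i : Fin n => (i : ℕ) + 1 < k) = Finset.Iio p := by
        ext i
        simp only [Finset.mem_filter, Finset.mem_univ, true_and, Finset.mem_Iio,
          Fin.lt_def, hpval]
        omega
      rw [e, Fin.card_Iio, hpval]
    rw [comps, hset, Finset.card_insert_of_notMem hnotmem, hcard]
    omega
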